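/- arXiv:0810.2743 — 2 statements merged into one kernel-verified Lean document; each statement's English description precedes it below -/
import Mathlib

section
/- Let W be a finite Coxeter group, L ⊆ S, x ∈ X_L^♯, and u ∈ W_L. Then D(x) ⊆ D(ux): every left descent of x is a left descent of ux. -/
/-- The left descent set of `w`. -/
def CoxD {B W : Type*} [Group W] {M : CoxeterMatrix B} (cs : CoxeterSystem M W)
    (w : W) : Set B :=
  {s | cs.length (cs.simple s * w) < cs.length w}

/-- The set `X_L = {x : ℓ(sx) > ℓ(x) for all s ∈ L}`. -/
def CoxX {B W : Type*} [Group W] {M : CoxeterMatrix B} (cs : CoxeterSystem M W)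
    (L : Set B) : Set W :=
  {x | ∀ s ∈ L, cs.length (cs.simple s * x) > cs.length x}

/-- `X_L^♯ = {x ∈ X_L : x⁻¹ L x ⊆ S}`. -/
def CoxXsharp {B W : Type*} [Group W] {M : CoxeterMatrix B} (cs : CoxeterSystem M W)
    (L : Set B) : Set W :=
  {x | x ∈ CoxX cs L ∧ ∀ s ∈ L, ∃ t, x⁻¹ * cs.simple s * x = cs.simple t}

/-- The standard parabolic subgroup `W_L`. -/
def CoxParabolic {B W : Type*} [Group W] {M : CoxeterMatrix B} (cs : CoxeterSystem M W)
    (L : Set B) : Subgroup W :=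
  Subgroup.closure (cs.simple '' L)

namespace CoxAux

open CoxeterSystem List
open scoped Classical

variable {B W : Type*} [Group W] {M : CoxeterMatrix B} (cs : CoxeterSystem M W)

local prefix:100 "σ" => cs.simple
local prefix:100 "π" => cs.wordProd
local prefix:100 "ℓ" => cs.length

/-- Auxiliary function for the signed reflection representation. -/
noncomputable def permAux (i : B) : W × ℤˣ → W × ℤˣ :=
  fun p => (σ i * p.1 * σ i, if p.1 = σ i then -p.2 else p.2)

theorem permAux_involutive (i : B) : Function.Involutive (permAux cs i) := by
  rintro ⟨t, ε⟩
  have hcoord : σ i * (σ i * t * σ i) * σ i = t := by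
    group
    simp [cs.simple_sq, zpow_two]
  by_cases h : t = σ i
  · subst h
    simp [permAux]
  · have h2 : ¬ (σ i * t * σ i = σ i) := by
      intro hc
      apply h
      have := congrArg (fun z => σ i * z * σ i) hc
      rw [hcoord] at this
      rw [this]
      rw [cs.simple_mul_simple_self]
      simp [cs.simple_sq, zpow_two]
    simp [permAux, h, h2, hcoord]

/-- The signed reflection permutation attached to a simple reflection. -/
noncomputable def permSimple (i : B) : Equiv.Perm (W × ℤˣ) := (permAux_involutive cs i).toPerm

theorem permSimple_apply (i : B) (p : W × ℤˣ) :
    permSimple cs i p = (σ i * p.1 * σ i, if p.1 = σ i then -p.2 else p.2) := rfl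

private theorem c_sj_c (i j : B) : (σ i * σ j) * σ j * (σ i * σ j) = σ j := by
  have : σ i * σ j * σ j = σ i := by
    rw [mul_assoc, cs.simple_mul_simple_self, mul_one]
  rw [this, ← mul_assoc, cs.simple_mul_simple_self, one_mul]

private theorem ck_sj_ck (i j : B) (k : ℕ) :
    (σ i * σ j) ^ k * σ j * (σ i * σ j) ^ k = σ j := by
  induction k with
  | zero => simp
  | succ k ih =>
    have h1 : (σ i * σ j) ^ (k + 1) = (σ i * σ j) * (σ i * σ j) ^ k := by
      rw [pow_succ']
    have h2 : (σ i * σ j) ^ (k + 1) = (σ i * σ j) ^ k * (σ i * σ j) := by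
      rw [pow_succ]
    nth_rewrite 2 [h2]
    rw [h1]
    calc (σ i * σ j) * (σ i * σ j) ^ k * σ j * ((σ i * σ j) ^ k * (σ i * σ j))
        = (σ i * σ j) * ((σ i * σ j) ^ k * σ j * (σ i * σ j) ^ k) * (σ i * σ j) := by
          group
      _ = σ j := by rw [ih]; exact c_sj_c cs i j

private noncomputable def signFactor (i j : B) (t : W) : ℤˣ :=
  (if t = σ j then -1 else 1) * (if σ j * t * σ j = σ i then -1 else 1)

private theorem step_formula (i j : B) (t : W) (ε : ℤˣ) :
    (permSimple cs i * permSimple cs j) (t, ε) =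
      ((σ i * σ j) * t * (σ i * σ j)⁻¹, ε * signFactor cs i j t) := by
  show permSimple cs i (permSimple cs j (t, ε)) = _
  rw [permSimple_apply, permSimple_apply]
  simp only [signFactor]
  have hfst : σ i * (σ j * t * σ j) * σ i = (σ i * σ j) * t * (σ i * σ j)⁻¹ := by
    rw [mul_inv_rev, cs.inv_simple, cs.inv_simple]
    group
  rw [Prod.mk.injEq]
  constructor
  · exact hfst
  · by_cases h1 : t = σ j <;> by_cases h2 : σ j * t * σ j = σ i <;>
      simp [h1, h2, mul_comm, mul_neg, neg_neg, mul_one]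

private theorem iterate_formula (i j : B) (n : ℕ) (t : W) (ε : ℤˣ) :
    ((permSimple cs i * permSimple cs j) ^ n) (t, ε) =
      ((σ i * σ j) ^ n * t * ((σ i * σ j) ^ n)⁻¹,
        ε * ∏ k ∈ Finset.range n,
          signFactor cs i j ((σ i * σ j) ^ k * t * ((σ i * σ j) ^ k)⁻¹)) := by
  induction n with
  | zero => simp
  | succ n ih =>
    rw [pow_succ']
    have happ : ((permSimple cs i * permSimple cs j) *
          (permSimple cs i * permSimple cs j) ^ n) (t, ε)
        = (permSimple cs i * permSimple cs j)
            (((permSimple cs i * permSimple cs j) ^ n) (t, ε)) := rfl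
    rw [happ, ih, step_formula]
    rw [Prod.mk.injEq]
    constructor
    · rw [pow_succ', mul_inv_rev]
      simp [mul_assoc]
    · rw [Finset.prod_range_succ, ← mul_assoc]

/-- The braid relations hold for the signed reflection permutations. -/
theorem permSimple_liftable : M.IsLiftable (fun i => permSimple cs i) := by
  intro i j
  set m := M i j with hm
  have hbraid : (σ i * σ j) ^ m = 1 := cs.simple_mul_simple_pow i j
  apply Equiv.ext
  rintro ⟨t, ε⟩
  rw [Equiv.Perm.one_apply]
  simp only
  rw [iterate_formula]
  set c := σ i * σ j with hc
  -- normal form of conditions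
  have hmulk : ∀ (a : W) (k : ℕ), c ^ k * (c ^ k * a) = c ^ (2 * k) * a := by
    intro a k
    rw [← mul_assoc, ← pow_add, two_mul]
  have hA : ∀ k : ℕ, (c ^ k * t * (c ^ k)⁻¹ = σ j) ↔ (c ^ (2 * k) * t = σ j) := by
    intro k
    rw [mul_inv_eq_iff_eq_mul]
    constructor
    · intro h
      have := congrArg (fun z => c ^ k * z) h
      rw [hmulk] at this
      rw [this, ← mul_assoc]
      exact ck_sj_ck cs i j k
    · intro h
      apply mul_left_cancel (a := c ^ k)
      rw [hmulk, h, ← mul_assoc, ck_sj_ck cs i j k]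
  have hB : ∀ k : ℕ, (σ j * (c ^ k * t * (c ^ k)⁻¹) * σ j = σ i)
      ↔ (c ^ (2 * k + 1) * t = σ j) := by
    intro k
    have hcsj : c ^ (k + 1) * (σ j * σ i * σ j * c ^ k) = σ j := by
      have h1 : c * (σ j * σ i * σ j) = σ j := by
        rw [hc]
        simp [mul_assoc]
      calc c ^ (k + 1) * (σ j * σ i * σ j * c ^ k)
          = c ^ k * (c * (σ j * σ i * σ j)) * c ^ k := by
            rw [pow_succ]
            simp [mul_assoc]
        _ = c ^ k * σ j * c ^ k := by rw [h1]
        _ = σ j := ck_sj_ck cs i j k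
    have hstep : ∀ a : W, c ^ (k + 1) * (c ^ k * a) = c ^ (2 * k + 1) * a := by
      intro a
      rw [← mul_assoc, ← pow_add]
      congr 2
      omega
    constructor
    · intro h
      have h1 : c ^ k * t * (c ^ k)⁻¹ = σ j * σ i * σ j := by
        rw [← h]
        simp [mul_assoc]
      have h2 : c ^ k * t = σ j * σ i * σ j * c ^ k := mul_inv_eq_iff_eq_mul.mp h1
      have h3 := congrArg (fun z => c ^ (k + 1) * z) h2
      rw [hstep, hcsj] at h3
      exact h3
    · intro h
      have h3 : c ^ (k + 1) * (c ^ k * t) = c ^ (k + 1) * (σ j * σ i * σ j * c ^ k) := by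
        rw [hstep, h, hcsj]
      have h4 : c ^ k * t = σ j * σ i * σ j * c ^ k := mul_left_cancel h3
      have h5 : c ^ k * t * (c ^ k)⁻¹ = σ j * σ i * σ j := by
        rw [mul_inv_eq_iff_eq_mul]
        exact h4
      rw [h5]
      simp [mul_assoc]
  -- define h
  set h : ℕ → ℤˣ := fun e => if c ^ e * t = σ j then -1 else 1 with hh
  have hprod : ∏ k ∈ Finset.range m, signFactor cs i j (c ^ k * t * (c ^ k)⁻¹)
      = ∏ k ∈ Finset.range m, (h (2 * k) * h (2 * k + 1)) := by
    apply Finset.prod_congr rfl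
    intro k _
    simp only [signFactor, hh]
    rw [if_congr (hA k) rfl rfl, if_congr (hB k) rfl rfl]
  have hpair : ∀ n : ℕ, ∏ k ∈ Finset.range n, (h (2 * k) * h (2 * k + 1))
      = ∏ e ∈ Finset.range (2 * n), h e := by
    intro n
    induction n with
    | zero => simp
    | succ n ihn =>
      have h2 : 2 * (n + 1) = 2 * n + 1 + 1 := by omega
      rw [Finset.prod_range_succ, ihn, h2, Finset.prod_range_succ, Finset.prod_range_succ,
        mul_assoc]
  have hper : ∀ e : ℕ, h (m + e) = h e := by
    intro e
    simp only [hh, pow_add, hbraid, one_mul]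
  have hsq : ∏ e ∈ Finset.range (2 * m), h e = 1 := by
    rw [two_mul, Finset.prod_range_add]
    have : ∀ x ∈ Finset.range m, h (m + x) = h x := fun x _ => hper x
    rw [Finset.prod_congr rfl this]
    exact Int.units_mul_self _
  rw [Prod.mk.injEq]
  constructor
  · rw [hbraid]
    simp
  · rw [hprod, hpair, hsq, mul_one]

/-- The signed reflection representation of the Coxeter group. -/
noncomputable def rep : W →* Equiv.Perm (W × ℤˣ) :=
  cs.lift ⟨fun i => permSimple cs i, permSimple_liftable cs⟩

theorem rep_simple (i : B) : rep cs (σ i) = permSimple cs i :=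
  cs.lift_apply_simple (permSimple_liftable cs) i

theorem rep_word (ω : List B) (t : W) (ε : ℤˣ) :
    rep cs (π ω) (t, ε) =
      (π ω * t * (π ω)⁻¹, ε * (-1) ^ ((cs.rightInvSeq ω).count t)) := by
  induction ω with
  | nil => simp
  | cons i ω ih =>
    rw [wordProd_cons, map_mul]
    have happ : (rep cs (σ i) * rep cs (π ω)) (t, ε)
        = rep cs (σ i) (rep cs (π ω) (t, ε)) := rfl
    rw [happ, ih, rep_simple, permSimple_apply]
    have hris : cs.rightInvSeq (i :: ω) = ((π ω)⁻¹ * σ i * (π ω)) :: cs.rightInvSeq ω := rfl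
    rw [hris, List.count_cons]
    simp only [beq_iff_eq]
    have hcond : ((π ω)⁻¹ * σ i * (π ω) = t) ↔ (π ω * t * (π ω)⁻¹ = σ i) := by
      constructor
      · intro h
        rw [← h]
        simp [mul_assoc]
      · intro h
        rw [← h]
        simp [← mul_assoc]
    rw [Prod.mk.injEq]
    constructor
    · rw [mul_inv_rev, cs.inv_simple]
      simp [mul_assoc]
    · by_cases h : π ω * t * (π ω)⁻¹ = σ i
      · rw [if_pos h, if_pos (hcond.mpr h), pow_add, pow_one]
        rw [mul_neg_one, mul_neg]
      · rw [if_neg h, if_neg (fun hc => h (hcond.mp hc)), add_zero]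

theorem sign_eq {ω ω' : List B} (h : π ω = π ω') (t : W) :
    ((-1 : ℤˣ)) ^ ((cs.rightInvSeq ω).count t)
      = (-1) ^ ((cs.rightInvSeq ω').count t) := by
  have h1 := rep_word cs ω t 1
  have h2 := rep_word cs ω' t 1
  rw [h, h2] at h1
  have := congrArg Prod.snd h1
  simpa using this.symm

theorem mem_rightInvSeq_of_descent {ω : List B} (hred : cs.IsReduced ω) {i : B}
    (hd : ℓ (π ω * σ i) < ℓ (π ω)) : σ i ∈ cs.rightInvSeq ω := by
  obtain ⟨ψ, hψred, hψ⟩ := cs.exists_reduced_word' (π ω * σ i)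
  have hψlen : ℓ (π ω * σ i) = ψ.length := by rw [hψ]; exact hψred
  have hlen : ℓ (π ω * σ i) + 1 = ℓ (π ω) :=
    (cs.length_mul_simple (π ω) i).resolve_left (by omega)
  have hπ : π (ψ.concat i) = π ω := by
    rw [wordProd_concat, ← hψ]
    simp [mul_assoc]
  have hred' : cs.IsReduced (ψ.concat i) := by
    show ℓ (π (ψ.concat i)) = (ψ.concat i).length
    rw [hπ, List.length_concat, ← hψlen]
    omega
  have hmem : σ i ∈ cs.rightInvSeq (ψ.concat i) := by
    rw [cs.rightInvSeq_concat]
    simp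
  have hcount' : (cs.rightInvSeq (ψ.concat i)).count (σ i) = 1 := by
    have h1 := List.nodup_iff_count_le_one.mp (hred'.nodup_rightInvSeq) (σ i)
    have h2 := List.count_pos_iff.mpr hmem
    omega
  have hsgn := sign_eq cs hπ (σ i)
  rw [hcount'] at hsgn
  by_contra hnot
  rw [List.count_eq_zero.mpr hnot] at hsgn
  simp at hsgn

theorem exchange_right {ω : List B} (hred : cs.IsReduced ω) {i : B}
    (hd : ℓ (π ω * σ i) < ℓ (π ω)) :
    ∃ j < ω.length, π (ω.eraseIdx j) = π ω * σ i := by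
  obtain ⟨j, hj, hget⟩ := List.mem_iff_getElem.mp (mem_rightInvSeq_of_descent cs hred hd)
  rw [cs.length_rightInvSeq] at hj
  refine ⟨j, hj, ?_⟩
  rw [← cs.wordProd_mul_getD_rightInvSeq ω j]
  congr 1
  rw [List.getD_eq_getElem _ _ (by rw [cs.length_rightInvSeq]; exact hj)]
  exact hget

theorem exchange_left {ω : List B} (hred : cs.IsReduced ω) {i : B}
    (hd : ℓ (σ i * π ω) < ℓ (π ω)) :
    ∃ j < ω.length, π (ω.eraseIdx j) = σ i * π ω := by
  have hrev : cs.IsReduced ω.reverse := (cs.isReduced_reverse_iff ω).mpr hred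
  have hd' : ℓ (π ω.reverse * σ i) < ℓ (π ω.reverse) := by
    rw [wordProd_reverse]
    have e1 : ℓ ((π ω)⁻¹ * σ i) = ℓ (σ i * π ω) := by
      rw [← cs.length_inv]
      congr 1
      rw [mul_inv_rev, inv_inv, cs.inv_simple]
    rw [e1, cs.length_inv]
    exact hd
  have hmem := mem_rightInvSeq_of_descent cs hrev hd'
  rw [cs.rightInvSeq_reverse, List.mem_reverse] at hmem
  obtain ⟨j, hj, hget⟩ := List.mem_iff_getElem.mp hmem
  rw [cs.length_leftInvSeq] at hj
  refine ⟨j, hj, ?_⟩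
  rw [← cs.getD_leftInvSeq_mul_wordProd ω j]
  congr 1
  rw [List.getD_eq_getElem _ _ (by rw [cs.length_leftInvSeq]; exact hj)]
  exact hget

section Parabolic

variable (L : Set B)

theorem wordProd_mem_closure {ω : List B} (hω : ∀ i ∈ ω, i ∈ L) :
    π ω ∈ Subgroup.closure (cs.simple '' L) := by
  induction ω with
  | nil => rw [wordProd_nil]; exact Subgroup.one_mem _
  | cons i ω ih =>
    rw [wordProd_cons]
    exact mul_mem (Subgroup.subset_closure ⟨i, hω i (List.mem_cons_self), rfl⟩)
      (ih fun k hk => hω k (List.mem_cons_of_mem _ hk))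

theorem exists_word_of_mem_closure {u : W} (hu : u ∈ Subgroup.closure (cs.simple '' L)) :
    ∃ ω : List B, (∀ i ∈ ω, i ∈ L) ∧ π ω = u := by
  induction hu using Subgroup.closure_induction with
  | mem w hw =>
    obtain ⟨i, hi, rfl⟩ := hw
    exact ⟨[i], by simpa using hi, by simp⟩
  | one => exact ⟨[], by simp, by simp⟩
  | mul a b _ _ iha ihb =>
    obtain ⟨α, hα, hπα⟩ := iha
    obtain ⟨β, hβ, hπβ⟩ := ihb
    refine ⟨α ++ β, ?_, by rw [wordProd_append, hπα, hπβ]⟩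
    intro k hk
    rcases List.mem_append.mp hk with h | h
    exacts [hα k h, hβ k h]
  | inv a _ iha =>
    obtain ⟨α, hα, hπα⟩ := iha
    exact ⟨α.reverse, fun k hk => hα k (List.mem_reverse.mp hk),
      by rw [wordProd_reverse, hπα]⟩

theorem exists_reduced_subword : ∀ (n : ℕ) (ω : List B), ω.length ≤ n →
    ∃ ω' : List B, (∀ i ∈ ω', i ∈ ω) ∧ cs.IsReduced ω' ∧ π ω' = π ω := by
  intro n
  induction n with
  | zero =>
    intro ω h
    have : ω = [] := List.length_eq_zero_iff.mp (by omega)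
    subst this
    exact ⟨[], by simp, by show ℓ (π []) = _; simp, rfl⟩
  | succ n IH =>
    intro ω hlen
    by_cases hred : cs.IsReduced ω
    · exact ⟨ω, fun _ h => h, hred, rfl⟩
    · have hek : ∃ k, k < ω.length ∧ cs.IsReduced (ω.take k) ∧
          ℓ (π (ω.take (k + 1))) < ℓ (π (ω.take k)) := by
        by_contra hcon
        push_neg at hcon
        have hstep : ∀ k, k ≤ ω.length → cs.IsReduced (ω.take k) := by
          intro k
          induction k with
          | zero => intro _; show ℓ (π (ω.take 0)) = (ω.take 0).length; simp
          | succ k ihk =>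
            intro hk1
            have hk : k < ω.length := by omega
            have hred_k := ihk (le_of_lt hk)
            have htake : ω.take (k + 1) = ω.take k ++ [ω[k]] := by
              rw [List.take_succ, List.getElem?_eq_getElem hk]
              rfl
            have hπt : π (ω.take (k + 1)) = π (ω.take k) * σ (ω[k]) := by
              rw [htake, wordProd_append, wordProd_singleton]
            have hlentake : (ω.take k).length = k := by
              rw [List.length_take]; omega
            have hlk : ℓ (π (ω.take k)) = k := by
              have h0 : ℓ (π (ω.take k)) = (ω.take k).length := hred_k
              omega
            have hge := hcon k hk hred_k
            rcases cs.length_mul_simple (π (ω.take k)) (ω[k]) with hca | hcb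
            · show ℓ (π (ω.take (k + 1))) = (ω.take (k + 1)).length
              rw [hπt, hca, List.length_take, hlk]
              omega
            · exfalso
              rw [hπt] at hge
              omega
        have := hstep ω.length le_rfl
        rw [List.take_length] at this
        exact hred this
      obtain ⟨k, hk, hredk, hdec⟩ := hek
      have htake : ω.take (k + 1) = ω.take k ++ [ω[k]] := by
        rw [List.take_succ, List.getElem?_eq_getElem hk]
        rfl
      have hπk : π (ω.take (k + 1)) = π (ω.take k) * σ (ω[k]) := by
        rw [htake, wordProd_append, wordProd_singleton]
      rw [hπk] at hdec
      obtain ⟨j, hj, hjer⟩ := exchange_right cs hredk hdec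
      have hlentake : (ω.take k).length = k := by
        rw [List.length_take]; omega
      set ω1 := (ω.take k).eraseIdx j ++ ω.drop (k + 1) with hω1
      have hπ1 : π ω1 = π ω := by
        rw [hω1, wordProd_append, hjer, ← hπk, ← wordProd_append, List.take_append_drop]
      have hlen1 : ω1.length ≤ n := by
        rw [hω1, List.length_append]
        have h1 : ((ω.take k).eraseIdx j).length + 1 = (ω.take k).length :=
          List.length_eraseIdx_add_one (by omega)
        have h2 : (ω.drop (k + 1)).length = ω.length - (k + 1) := List.length_drop
        omega
      obtain ⟨ω', hsub, hred', hπ'⟩ := IH ω1 hlen1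
      refine ⟨ω', ?_, hred', by rw [hπ', hπ1]⟩
      intro i hi
      have hi1 := hsub i hi
      rw [hω1] at hi1
      rcases List.mem_append.mp hi1 with h | h
      · exact (List.take_sublist k ω).subset ((List.eraseIdx_sublist _ j).subset h)
      · exact (List.drop_sublist (k + 1) ω).subset h

theorem exists_reduced_Lword {u : W} (hu : u ∈ Subgroup.closure (cs.simple '' L)) :
    ∃ ω : List B, (∀ i ∈ ω, i ∈ L) ∧ cs.IsReduced ω ∧ π ω = u := by
  obtain ⟨ω, hωL, hωπ⟩ := exists_word_of_mem_closure cs L hu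
  obtain ⟨ω', hsub, hred, hπ⟩ := exists_reduced_subword cs ω.length ω le_rfl
  exact ⟨ω', fun i hi => hωL i (hsub i hi), hred, by rw [hπ, hωπ]⟩

theorem length_min_add (x₀ : W)
    (hmin : ∀ v ∈ Subgroup.closure (cs.simple '' L), ℓ x₀ ≤ ℓ (v * x₀)) :
    ∀ (n : ℕ) (u : W), u ∈ Subgroup.closure (cs.simple '' L) → ℓ u = n →
      ℓ (u * x₀) = ℓ u + ℓ x₀ := by
  intro n
  induction n using Nat.strong_induction_on with
  | _ n IH =>
  intro u hu hn
  obtain ⟨ω, hωL, hωred, hωπ⟩ := exists_reduced_Lword cs L hu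
  cases ω with
  | nil =>
    rw [← hωπ]
    simp
  | cons i ω' =>
    have hiL : i ∈ L := hωL i (List.mem_cons_self)
    have hω'L : ∀ k ∈ ω', k ∈ L := fun k hk => hωL k (List.mem_cons_of_mem _ hk)
    have hred' : cs.IsReduced ω' := by
      have := hωred.drop 1
      simpa using this
    have hu'mem : π ω' ∈ Subgroup.closure (cs.simple '' L) := wordProd_mem_closure cs L hω'L
    have hℓu : ℓ u = ω'.length + 1 := by
      have h0 : ℓ (π (i :: ω')) = (i :: ω').length := hωred
      rw [← hωπ, h0, List.length_cons]
    have hℓu' : ℓ (π ω') = ω'.length := hred'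
    have hIH := IH ω'.length (by omega) (π ω') hu'mem hℓu'
    have hu_eq : u = σ i * π ω' := by rw [← hωπ, wordProd_cons]
    rcases cs.length_simple_mul (π ω' * x₀) i with hca | hcb
    · rw [hu_eq, mul_assoc, hca, hIH]
      rw [hu_eq] at hℓu
      omega
    · exfalso
      obtain ⟨ξ, hξred, hξπ⟩ := cs.exists_reduced_word' x₀
      have hξlen : ξ.length = ℓ x₀ := by
        have h0 : ℓ (π ξ) = ξ.length := hξred
        rw [← hξπ] at h0
        omega
      have hΩπ : π (ω' ++ ξ) = π ω' * x₀ := by rw [wordProd_append, ← hξπ]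
      have hΩred : cs.IsReduced (ω' ++ ξ) := by
        show ℓ (π (ω' ++ ξ)) = _
        rw [hΩπ, List.length_append, hIH, hℓu', hξlen]
      have hdesc : ℓ (σ i * π (ω' ++ ξ)) < ℓ (π (ω' ++ ξ)) := by
        rw [hΩπ]
        omega
      obtain ⟨j, hj, hjer⟩ := exchange_left cs hΩred hdesc
      rw [List.length_append] at hj
      rw [hΩπ] at hjer
      by_cases hjlt : j < ω'.length
      · rw [List.eraseIdx_append_of_lt_length hjlt, wordProd_append, ← hξπ] at hjer
        have hcanc : π (ω'.eraseIdx j) = σ i * π ω' := by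
          apply mul_right_cancel (b := x₀)
          rw [hjer, mul_assoc]
        have hlen1 : ℓ (σ i * π ω') ≤ (ω'.eraseIdx j).length := by
          rw [← hcanc]
          exact cs.length_wordProd_le _
        have hlen2 : (ω'.eraseIdx j).length + 1 = ω'.length :=
          List.length_eraseIdx_add_one hjlt
        rw [← hu_eq] at hlen1
        omega
      · push_neg at hjlt
        rw [List.eraseIdx_append_of_length_le hjlt, wordProd_append] at hjer
        set m := j - ω'.length with hm
        have hmlt : m < ξ.length := by omega
        have hz : ((π ω')⁻¹ * (σ i * π ω')) * x₀ = π (ξ.eraseIdx m) := by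
          apply mul_left_cancel (a := π ω')
          rw [hjer]
          simp [mul_assoc]
        have hv : (π ω')⁻¹ * (σ i * π ω') ∈ Subgroup.closure (cs.simple '' L) :=
          mul_mem (inv_mem hu'mem)
            (mul_mem (Subgroup.subset_closure ⟨i, hiL, rfl⟩) hu'mem)
        have hge := hmin _ hv
        rw [hz] at hge
        have hle : ℓ (π (ξ.eraseIdx m)) ≤ (ξ.eraseIdx m).length := cs.length_wordProd_le _
        have hlen3 : (ξ.eraseIdx m).length + 1 = ξ.length :=
          List.length_eraseIdx_add_one hmlt
        omega

theorem length_coset_add {x : W} (hx : ∀ i ∈ L, ℓ x < ℓ (σ i * x)) :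
    ∀ u ∈ Subgroup.closure (cs.simple '' L), ℓ (u * x) = ℓ u + ℓ x := by
  have hne : {n | ∃ v ∈ Subgroup.closure (cs.simple '' L), ℓ (v * x) = n}.Nonempty :=
    ⟨ℓ (1 * x), 1, Subgroup.one_mem _, rfl⟩
  obtain ⟨v₀, hv₀mem, hv₀⟩ := Nat.sInf_mem hne
  set x₀ := v₀ * x with hx₀
  have hmin : ∀ v ∈ Subgroup.closure (cs.simple '' L), ℓ x₀ ≤ ℓ (v * x₀) := by
    intro v hv
    rw [hx₀, ← mul_assoc, hv₀]
    exact Nat.sInf_le ⟨v * v₀, mul_mem hv hv₀mem, rfl⟩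
  have hadd : ∀ u ∈ Subgroup.closure (cs.simple '' L), ℓ (u * x₀) = ℓ u + ℓ x₀ :=
    fun u hu => length_min_add cs L x₀ hmin (ℓ u) u hu rfl
  have hx0 : x = v₀⁻¹ * x₀ := by rw [hx₀, ← mul_assoc, inv_mul_cancel, one_mul]
  have hv1 : v₀ = 1 := by
    by_contra hne1
    have hv₀inv : v₀⁻¹ ∈ Subgroup.closure (cs.simple '' L) := inv_mem hv₀mem
    have hlv : ℓ (v₀⁻¹) ≠ 0 := by
      intro h0
      exact hne1 (by rw [← inv_inv v₀, cs.length_eq_zero_iff.mp h0, inv_one])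
    obtain ⟨ρ, hρL, hρred, hρπ⟩ := exists_reduced_Lword cs L hv₀inv
    cases ρ with
    | nil => exact hlv (by rw [← hρπ]; simp)
    | cons k ρ' =>
      have hkL := hρL k (List.mem_cons_self)
      have hρ'red : cs.IsReduced ρ' := by
        have := hρred.drop 1
        simpa using this
      have hρ'mem : π ρ' ∈ Subgroup.closure (cs.simple '' L) :=
        wordProd_mem_closure cs L (fun a ha => hρL a (List.mem_cons_of_mem _ ha))
      have h1 : σ k * x = π ρ' * x₀ := by
        rw [hx0, ← hρπ, wordProd_cons]
        simp [mul_assoc]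
      have h2 : ℓ (σ k * x) = ℓ (π ρ') + ℓ x₀ := by rw [h1]; exact hadd _ hρ'mem
      have h3 : ℓ x = ℓ (v₀⁻¹) + ℓ x₀ := by
        rw [hx0]
        exact hadd _ hv₀inv
      have h4 : ℓ (v₀⁻¹) = ρ'.length + 1 := by
        have h0 : ℓ (π (k :: ρ')) = (k :: ρ').length := hρred
        rw [← hρπ, h0, List.length_cons]
      have h5 : ℓ (π ρ') = ρ'.length := hρ'red
      have h6 := hx k hkL
      omega
  intro u hu
  have := hadd u hu
  rw [hx₀, hv1, one_mul] at this
  exact this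

theorem conj_word {x : W} (hsh : ∀ i ∈ L, ∃ t, x⁻¹ * σ i * x = σ t) :
    ∀ ω : List B, (∀ i ∈ ω, i ∈ L) → ∃ w : W, x * w = π ω * x ∧ ℓ w ≤ ω.length := by
  intro ω
  induction ω with
  | nil => exact fun _ => ⟨1, by simp, by simp⟩
  | cons i ω' ih =>
    intro hωL
    obtain ⟨w', hw', hℓw'⟩ := ih (fun k hk => hωL k (List.mem_cons_of_mem _ hk))
    obtain ⟨t, ht⟩ := hsh i (hωL i (List.mem_cons_self))
    have hs : x * σ t = σ i * x := by
      rw [← ht, ← mul_assoc, ← mul_assoc, mul_inv_cancel, one_mul]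
    refine ⟨σ t * w', ?_, ?_⟩
    · rw [wordProd_cons, ← mul_assoc, hs, mul_assoc, hw', mul_assoc]
    · calc ℓ (σ t * w') ≤ ℓ (σ t) + ℓ w' := cs.length_mul_le _ _
        _ ≤ 1 + ω'.length := by rw [cs.length_simple]; omega
        _ = (i :: ω').length := by rw [List.length_cons]; omega

end Parabolic

end CoxAux

/-- If `x ∈ X_L^♯` and `u ∈ W_L` then `D(x) ⊆ D(ux)`. -/
theorem stmt12 {B W : Type*} [Fintype B] [Group W] [Fintype W]
    {M : CoxeterMatrix B} (cs : CoxeterSystem M W) (L : Set B) (x u : W)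
    (hx : x ∈ CoxXsharp cs L) (hu : u ∈ CoxParabolic cs L) :
    CoxD cs x ⊆ CoxD cs (u * x) := by
  obtain ⟨hxX, hxS⟩ := hx
  intro b hb
  simp only [CoxD, Set.mem_setOf_eq] at hb ⊢
  have hxL : ∀ i ∈ L, cs.length x < cs.length (cs.simple i * x) := fun i hi => hxX i hi
  have hu' : u ∈ Subgroup.closure (cs.simple '' L) := hu
  obtain ⟨ω, hωL, hωred, hωπ⟩ := CoxAux.exists_reduced_Lword cs L hu'
  obtain ⟨w, hw, hℓw⟩ := CoxAux.conj_word cs L hxS ω hωL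
  have hωlen : ω.length = cs.length u := by
    rw [← hωπ]
    exact hωred.symm
  have hadd := CoxAux.length_coset_add cs L hxL u hu'
  have hkey : cs.simple b * (u * x) = (cs.simple b * x) * w := by
    rw [← hωπ, ← mul_assoc (cs.simple b), mul_assoc, ← hw, mul_assoc]
  have h1 : cs.length (cs.simple b * (u * x)) ≤ cs.length (cs.simple b * x) + cs.length w := by
    rw [hkey]
    exact cs.length_mul_le _ _
  omega
end

section
/- Let W be a finite Coxeter group, L ⊆ S, d ∈ X_L^♯ and u ∈ W_L. Then ℓ(d⁻¹ u d) = ℓ(u); that is, conjugation by d ∈ X_L^♯ preserves the length of elements of W_L. -/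
open List CoxeterSystem

namespace CoxAux

open scoped Classical

variable {B W : Type*} [Group W] {M : CoxeterMatrix B} (cs : CoxeterSystem M W)

local prefix:100 "s" => cs.simple
local prefix:100 "π" => cs.wordProd
local prefix:100 "ℓ" => cs.length

/-- The permutation of `W × Bool` associated to a simple reflection. -/
noncomputable def sigma (i : B) : Equiv.Perm (W × Bool) where
  toFun x := (s i * x.1 * s i, if x.1 = s i then !x.2 else x.2)
  invFun x := (s i * x.1 * s i, if x.1 = s i then !x.2 else x.2)
  left_inv := by
    rintro ⟨t, ε⟩
    have h1 : s i * (s i * t * s i) * s i = t := by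
      rw [← mul_assoc, ← mul_assoc, cs.simple_mul_simple_self, one_mul, mul_assoc,
        cs.simple_mul_simple_self, mul_one]
    have h2 : (s i * t * s i = s i) ↔ (t = s i) := by
      constructor
      · intro h
        have := congrArg (fun x => s i * x * s i) h
        simpa [h1, ← mul_assoc, cs.simple_mul_simple_self] using this
      · rintro rfl; rw [cs.simple_mul_simple_self, one_mul]
    simp only [h1, h2]
    by_cases h : t = s i <;> simp [h]
  right_inv := by
    rintro ⟨t, ε⟩
    have h1 : s i * (s i * t * s i) * s i = t := by
      rw [← mul_assoc, ← mul_assoc, cs.simple_mul_simple_self, one_mul, mul_assoc,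
        cs.simple_mul_simple_self, mul_one]
    have h2 : (s i * t * s i = s i) ↔ (t = s i) := by
      constructor
      · intro h
        have := congrArg (fun x => s i * x * s i) h
        simpa [h1, ← mul_assoc, cs.simple_mul_simple_self] using this
      · rintro rfl; rw [cs.simple_mul_simple_self, one_mul]
    simp only [h1, h2]
    by_cases h : t = s i <;> simp [h]

theorem sigma_apply (i : B) (t : W) (ε : Bool) :
    sigma cs i (t, ε) = (s i * t * s i, if t = s i then !ε else ε) := rfl

end CoxAux

namespace Part2
open scoped Classical
variable {B W : Type*} [Group W] {M : CoxeterMatrix B} (cs : CoxeterSystem M W)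

local prefix:100 "s" => cs.simple
local prefix:100 "π" => cs.wordProd
local prefix:100 "ℓ" => cs.length

theorem conj_eq_iff (x y g : W) : (g * x * g⁻¹ = y) ↔ (x = g⁻¹ * y * g) := by
  constructor
  · rintro rfl; group
  · rintro rfl; group

theorem simple_mul_pow (i j : B) (m : ℕ) :
    s j * (s i * s j) ^ m = ((s i * s j) ^ m)⁻¹ * s j := by
  have base : (MulAut.conj (s j)) (s i * s j) = (s i * s j)⁻¹ := by
    rw [MulAut.conj_apply, cs.inv_simple, mul_inv_rev, cs.inv_simple, cs.inv_simple]
    rw [mul_assoc, mul_assoc, cs.simple_mul_simple_self, mul_one]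
  have key : (MulAut.conj (s j)) ((s i * s j) ^ m) = ((s i * s j) ^ m)⁻¹ := by
    rw [map_pow, base, inv_pow]
  rw [MulAut.conj_apply, cs.inv_simple] at key
  calc s j * (s i * s j) ^ m = (s j * (s i * s j) ^ m * s j) * s j := by
        rw [mul_assoc, cs.simple_mul_simple_self, mul_one]
    _ = ((s i * s j) ^ m)⁻¹ * s j := by rw [key]

theorem inv_pow_simple_pow (i j : B) (m : ℕ) :
    ((s i * s j) ^ m)⁻¹ * s j * (s i * s j) ^ m = s j * (s i * s j) ^ (2 * m) := by
  rw [← simple_mul_pow cs i j m, mul_assoc, ← pow_add, two_mul]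

theorem bodd_ite (C : Prop) [Decidable C] : (if C then (1:ℕ) else 0).bodd = decide C := by
  by_cases h : C <;> simp [h]

theorem if_not_eq_xor (C : Prop) [Decidable C] (x : Bool) :
    (if C then !x else x) = xor (decide C) x := by
  by_cases h : C <;> simp [h]

open CoxAux in
theorem sigma_mul_pow_apply (i j : B) (m : ℕ) (t : W) (ε : Bool) :
    ((sigma cs i * sigma cs j) ^ m) (t, ε) =
      ((s i * s j) ^ m * t * ((s i * s j) ^ m)⁻¹,
        xor ε (Nat.bodd ((List.range (2 * m)).countP
          (fun k => decide (t = s j * (s i * s j) ^ k))))) := by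
  induction m with
  | zero => simp
  | succ m ih =>
    have hp : (2 : ℕ) * (m + 1) = (2 * m) + 1 + 1 := by ring
    rw [pow_succ', Equiv.Perm.mul_apply, ih, Equiv.Perm.mul_apply, sigma_apply, sigma_apply]
    set p := s i * s j with hpdef
    have hfst : s i * (s j * (p ^ m * t * (p ^ m)⁻¹) * s j) * s i
        = p ^ (m+1) * t * (p ^ (m+1))⁻¹ := by
      rw [pow_succ' p m, hpdef, mul_inv_rev, mul_inv_rev, cs.inv_simple, cs.inv_simple]
      group
    have hc1 : (p ^ m * t * (p ^ m)⁻¹ = s j) ↔ (t = s j * p ^ (2 * m)) := by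
      rw [conj_eq_iff, inv_pow_simple_pow]
    have hc2 : (s j * (p ^ m * t * (p ^ m)⁻¹) * s j = s i) ↔ (t = s j * p ^ (2 * m + 1)) := by
      have e0 := conj_eq_iff (p ^ m * t * (p ^ m)⁻¹) (s i) (s j)
      rw [cs.inv_simple] at e0
      rw [e0, conj_eq_iff]
      have h1 : s j * s i * s j = s j * p := by rw [hpdef, mul_assoc]
      have e2 : (p ^ m)⁻¹ * (s j * p) * p ^ m = s j * p ^ (2*m+1) := by
        calc (p ^ m)⁻¹ * (s j * p) * p ^ m
            = ((p ^ m)⁻¹ * s j * p ^ m) * p := by group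
          _ = s j * p ^ (2 * m) * p := by rw [inv_pow_simple_pow]
          _ = s j * p ^ (2 * m + 1) := by rw [mul_assoc, ← pow_succ]
      rw [h1, e2]
    have hcount : (List.range (2 * (m+1))).countP
          (fun k => decide (t = s j * p ^ k))
        = (List.range (2 * m)).countP (fun k => decide (t = s j * p ^ k))
          + ((if t = s j * p ^ (2*m) then 1 else 0)
            + (if t = s j * p ^ (2*m+1) then 1 else 0)) := by
      rw [hp, List.range_succ, List.range_succ, List.countP_append, List.countP_append]
      simp [List.countP_cons, add_assoc]
    rw [Prod.mk.injEq]
    refine ⟨hfst, ?_⟩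
    rw [hcount]
    simp only [hc1, hc2, if_not_eq_xor, Nat.bodd_add, bodd_ite]
    generalize (Nat.bodd ((List.range (2 * m)).countP
      (fun k => decide (t = s j * p ^ k)))) = b
    generalize (decide (t = s j * p ^ (2*m))) = d1
    generalize (decide (t = s j * p ^ (2*m+1))) = d2
    cases ε <;> cases b <;> cases d1 <;> cases d2 <;> rfl

theorem sigma_liftable : M.IsLiftable (fun i => CoxAux.sigma cs i) := by
  intro i j
  rcases Nat.eq_zero_or_pos (M i j) with h0 | hpos
  · rw [h0, pow_zero]
  · apply Equiv.ext
    rintro ⟨t, ε⟩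
    rw [sigma_mul_pow_apply]
    have hrel : (s i * s j) ^ (M i j) = 1 := cs.simple_mul_simple_pow i j
    have hcount : (List.range (2 * M i j)).countP
          (fun k => decide (t = s j * (s i * s j) ^ k))
        = 2 * (List.range (M i j)).countP (fun k => decide (t = s j * (s i * s j) ^ k)) := by
      rw [two_mul, List.range_add, List.countP_append, List.countP_map, two_mul]
      congr 1
      apply List.countP_congr
      intro k _
      simp only [Function.comp]
      rw [pow_add, hrel, one_mul]
    rw [hcount, hrel]
    simp [Nat.bodd_add, Nat.bodd_mul]

end Part2

namespace Part3
open scoped Classical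
open CoxAux Part2
variable {B W : Type*} [Group W] {M : CoxeterMatrix B} (cs : CoxeterSystem M W)

local prefix:100 "s" => cs.simple
local prefix:100 "π" => cs.wordProd
local prefix:100 "ℓ" => cs.length

/-- The reflection-parity representation of `W` on `W × Bool`. -/
noncomputable def permRep : W →* Equiv.Perm (W × Bool) :=
  cs.lift ⟨fun i => CoxAux.sigma cs i, Part2.sigma_liftable cs⟩

theorem permRep_simple (i : B) : permRep cs (s i) = CoxAux.sigma cs i :=
  cs.lift_apply_simple _ i

theorem leftInvSeq_cons (i : B) (ω : List B) :
    cs.leftInvSeq (i :: ω) = s i :: List.map (MulAut.conj (s i)) (cs.leftInvSeq ω) := rfl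

theorem permRep_wordProd_inv_apply (ω : List B) (t : W) (ε : Bool) :
    permRep cs (π ω)⁻¹ (t, ε) =
      ((π ω)⁻¹ * t * π ω, xor ε (Nat.bodd ((cs.leftInvSeq ω).count t))) := by
  induction ω generalizing t ε with
  | nil => simp
  | cons i ω ih =>
    have hinv : (π (i :: ω))⁻¹ = (π ω)⁻¹ * s i := by
      rw [cs.wordProd_cons, mul_inv_rev, cs.inv_simple]
    rw [hinv, map_mul, Equiv.Perm.mul_apply, permRep_simple, sigma_apply, ih]
    rw [Prod.mk.injEq]
    constructor
    · rw [cs.wordProd_cons]; group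
    · rw [leftInvSeq_cons, List.count_cons]
      have hmap : (List.map (⇑(MulAut.conj (s i))) (cs.leftInvSeq ω)).count t
          = (cs.leftInvSeq ω).count (s i * t * s i) := by
        have ht : t = (MulAut.conj (s i)) (s i * t * s i) := by
          rw [MulAut.conj_apply, cs.inv_simple, ← mul_assoc, ← mul_assoc,
            cs.simple_mul_simple_self, one_mul, mul_assoc, cs.simple_mul_simple_self, mul_one]
        nth_rewrite 1 [ht]
        exact List.count_map_of_injective _ _ (MulAut.conj (s i)).injective _
      rw [hmap, Nat.bodd_add]
      have hbeq : (s i == t) = decide (t = s i) := by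
        have h1 : (s i == t) = decide (s i = t) := rfl
        rw [h1, decide_eq_decide]
        exact eq_comm
      rw [hbeq, bodd_ite]
      generalize (Nat.bodd ((cs.leftInvSeq ω).count (s i * t * s i))) = b
      by_cases h : t = s i <;> simp [h] <;> cases ε <;> cases b <;> rfl

/-- The parity cocycle. -/
noncomputable def eta (w t : W) : Bool := (permRep cs w⁻¹ (t, false)).2

theorem eta_wordProd (ω : List B) (t : W) :
    eta cs (π ω) t = Nat.bodd ((cs.leftInvSeq ω).count t) := by
  rw [eta, permRep_wordProd_inv_apply]
  simp

theorem permRep_inv_apply (w t : W) (ε : Bool) :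
    permRep cs w⁻¹ (t, ε) = (w⁻¹ * t * w, xor ε (eta cs w t)) := by
  obtain ⟨ω, rfl⟩ := cs.wordProd_surjective w
  rw [permRep_wordProd_inv_apply, eta_wordProd]

theorem eta_mul (a b t : W) :
    eta cs (a * b) t = xor (eta cs a t) (eta cs b (a⁻¹ * t * a)) := by
  have h3 : permRep cs (a*b)⁻¹ (t, false)
      = (b⁻¹ * (a⁻¹ * t * a) * b, xor (xor false (eta cs a t)) (eta cs b (a⁻¹ * t * a))) := by
    rw [mul_inv_rev, map_mul, Equiv.Perm.mul_apply, permRep_inv_apply, permRep_inv_apply]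
  have h4 := (permRep_inv_apply cs (a*b) t false).symm.trans h3
  have := congrArg Prod.snd h4
  simpa using this

theorem eta_one (t : W) : eta cs 1 t = false := by
  simp [eta]

theorem eta_simple (i : B) (t : W) : eta cs (s i) t = decide (t = s i) := by
  have h : eta cs (π [i]) t = Nat.bodd ((cs.leftInvSeq [i]).count t) := eta_wordProd cs [i] t
  rw [cs.wordProd_singleton] at h
  rw [h, cs.leftInvSeq_singleton]
  by_cases ht : t = s i
  · subst ht; simp
  · have h0 : ([s i].count t) = 0 := List.count_eq_zero.mpr (by simp [ht])
    rw [h0]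
    simp [ht]

theorem eta_inv_conj (a x : W) : eta cs a⁻¹ (a⁻¹ * x * a) = eta cs a x := by
  have h := eta_mul cs a a⁻¹ x
  rw [mul_inv_cancel, eta_one] at h
  cases hu : eta cs a x <;> cases hv : eta cs a⁻¹ (a⁻¹ * x * a) <;>
    rw [hu, hv] at h <;> simp_all

theorem eta_isReflection_self {t : W} (ht : cs.IsReflection t) : eta cs t t = true := by
  obtain ⟨v, k, rfl⟩ := ht
  have h1 : v * s k * v⁻¹ = v * (s k * v⁻¹) := by rw [mul_assoc]
  nth_rewrite 1 [h1]
  rw [eta_mul]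
  have h2 : v⁻¹ * (v * s k * v⁻¹) * v = s k := by group
  rw [h2, eta_mul]
  have h3 : (s k)⁻¹ * s k * s k = s k := by rw [inv_mul_cancel, one_mul]
  rw [h3, eta_simple]
  have h4 : eta cs v⁻¹ (s k) = eta cs v (v * s k * v⁻¹) := by
    rw [← eta_inv_conj cs v (v * s k * v⁻¹), h2]
  rw [h4]
  simp

theorem strong_exchange {t w : W} (ht : cs.IsReflection t) (hlt : ℓ (t * w) < ℓ w)
    {ω : List B} (hred : cs.IsReduced ω) (hw : π ω = w) : t ∈ cs.leftInvSeq ω := by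
  have htt : t * t = 1 := ht.mul_self
  obtain ⟨ωu, hredu, hωu⟩ := cs.exists_reduced_word' (t * w)
  have htu : t * (t * w) = w := by rw [← mul_assoc, htt, one_mul]
  have hnot : t ∉ cs.leftInvSeq ωu := by
    intro hmem
    have h := (cs.isLeftInversion_of_mem_leftInvSeq hredu hmem).2
    rw [← hωu, htu] at h
    exact lt_asymm h hlt
  have hcount0 : (cs.leftInvSeq ωu).count t = 0 := List.count_eq_zero.mpr hnot
  have hη : eta cs w t = true := by
    rw [← htu, eta_mul]
    have e1 : t⁻¹ * t * t = t := by rw [inv_mul_cancel, one_mul]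
    rw [e1, eta_isReflection_self cs ht]
    have e2 : eta cs (t * w) t = false := by
      rw [hωu, eta_wordProd, hcount0]; rfl
    rw [e2]
    rfl
  rw [← hw, eta_wordProd] at hη
  have hne : (cs.leftInvSeq ω).count t ≠ 0 := by
    intro h0; rw [h0] at hη; simp at hη
  exact List.count_pos_iff.mp (Nat.pos_of_ne_zero hne)

end Part3

namespace Part4
open scoped Classical
open Part3
variable {B W : Type*} [Group W] {M : CoxeterMatrix B} (cs : CoxeterSystem M W)

local prefix:100 "s" => cs.simple
local prefix:100 "π" => cs.wordProd
local prefix:100 "ℓ" => cs.length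

theorem eraseIdx_append_left {α : Type*} (a b : List α) (j : ℕ) (h : j < a.length) :
    (a ++ b).eraseIdx j = a.eraseIdx j ++ b := by
  induction a generalizing j with
  | nil => simp at h
  | cons x a ih =>
    cases j with
    | zero => simp [List.eraseIdx]
    | succ j =>
      simp only [List.cons_append, List.eraseIdx, List.append_eq]
      rw [ih j (by simpa using h)]

theorem eraseIdx_append_right {α : Type*} (a b : List α) (j : ℕ) (h : a.length ≤ j) :
    (a ++ b).eraseIdx j = a ++ b.eraseIdx (j - a.length) := by
  induction a generalizing j with
  | nil => simp
  | cons x a ih =>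
    cases j with
    | zero => simp at h
    | succ j =>
      simp only [List.cons_append, List.eraseIdx, List.length_cons, List.append_eq]
      rw [ih j (by simpa using h)]
      simp [Nat.succ_sub_succ]

/-- Left exchange property with explicit deletion. -/
theorem exchange_left {t w : W} (ht : cs.IsReflection t) (hlt : ℓ (t * w) < ℓ w)
    {ω : List B} (hred : cs.IsReduced ω) (hw : π ω = w) :
    ∃ j < ω.length, t * w = π (ω.eraseIdx j) := by
  have hmem := strong_exchange cs ht hlt hred hw
  obtain ⟨j, hj, hget⟩ := List.mem_iff_getElem.mp hmem
  rw [cs.length_leftInvSeq] at hj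
  refine ⟨j, hj, ?_⟩
  have := cs.getD_leftInvSeq_mul_wordProd ω j
  rw [List.getD_eq_getElem _ 1 (by rw [cs.length_leftInvSeq]; exact hj), hget, hw] at this
  exact this

/-- Right exchange property with explicit deletion. -/
theorem exchange_right {t w : W} (ht : cs.IsReflection t) (hlt : ℓ (w * t) < ℓ w)
    {ω : List B} (hred : cs.IsReduced ω) (hw : π ω = w) :
    ∃ j < ω.length, w * t = π (ω.eraseIdx j) := by
  -- use the left exchange on the reversed word
  have hrev : π ω.reverse = w⁻¹ := by rw [cs.wordProd_reverse, hw]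
  have hlt' : ℓ (t * w⁻¹) < ℓ w⁻¹ := by
    have h1 : t * w⁻¹ = (w * t)⁻¹ := by rw [mul_inv_rev, ht.inv]
    rw [h1, cs.length_inv, cs.length_inv]
    exact hlt
  have hmem := strong_exchange cs ht hlt' (by rwa [cs.isReduced_reverse_iff]) hrev
  rw [cs.leftInvSeq_reverse] at hmem
  have hmem' : t ∈ cs.rightInvSeq ω := List.mem_reverse.mp hmem
  obtain ⟨j, hj, hget⟩ := List.mem_iff_getElem.mp hmem'
  rw [cs.length_rightInvSeq] at hj
  refine ⟨j, hj, ?_⟩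
  have := cs.wordProd_mul_getD_rightInvSeq ω j
  rw [List.getD_eq_getElem _ 1 (by rw [cs.length_rightInvSeq]; exact hj), hget, hw] at this
  exact this

/-- Any word has a reduced subword with the same product. -/
theorem exists_reduced_subword :
    ∀ n (ω : List B), ω.length ≤ n →
      ∃ ω' : List B, (∀ i ∈ ω', i ∈ ω) ∧ cs.IsReduced ω' ∧ π ω' = π ω := by
  intro n
  induction n with
  | zero =>
    intro ω hω
    have : ω = [] := List.eq_nil_of_length_eq_zero (Nat.le_zero.mp hω)
    subst this
    exact ⟨[], by simp, by simp [CoxeterSystem.IsReduced], rfl⟩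
  | succ n ih =>
    intro ω hω
    by_cases hred : cs.IsReduced ω
    · exact ⟨ω, fun i hi => hi, hred, rfl⟩
    · -- find the minimal non-reduced prefix
      have hne : ω ≠ [] := by rintro rfl; exact hred (by simp [CoxeterSystem.IsReduced])
      have hP : ∃ k, ¬ cs.IsReduced (ω.take (k+1)) := by
        refine ⟨ω.length - 1, ?_⟩
        rwa [Nat.sub_add_cancel (List.length_pos_iff.mpr hne), List.take_length]
      set k := Nat.find hP with hkdef
      have hk : ¬ cs.IsReduced (ω.take (k+1)) := Nat.find_spec hP
      have hklt : k < ω.length := by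
        have hle : Nat.find hP ≤ ω.length - 1 := Nat.find_le (by
          rwa [Nat.sub_add_cancel (List.length_pos_iff.mpr hne), List.take_length])
        have hpos : 0 < ω.length := List.length_pos_iff.mpr hne
        omega
      have hprev : cs.IsReduced (ω.take k) := by
        rcases Nat.eq_zero_or_pos k with h0 | hpos
        · rw [h0]; simp [CoxeterSystem.IsReduced]
        · have hmin := Nat.find_min hP (show k - 1 < Nat.find hP by omega)
          rw [Nat.sub_add_cancel hpos] at hmin
          exact not_not.mp hmin
      have htake : ω.take (k+1) = ω.take k ++ [ω[k]] := (List.take_concat_get' ω k hklt).symm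
      have hlen_take : (ω.take k).length = k := by
        rw [List.length_take]; omega
      have hlt : ℓ (π (ω.take k) * s (ω[k])) < ℓ (π (ω.take k)) := by
        have hne' : ℓ (π (ω.take k) * s (ω[k])) ≠ ℓ (π (ω.take k)) + 1 := by
          intro heq
          apply hk
          rw [CoxeterSystem.IsReduced, htake, cs.wordProd_append, cs.wordProd_singleton]
          rw [heq, hprev, hlen_take]
          rw [List.length_append, hlen_take]
          simp
        rcases cs.length_mul_simple (π (ω.take k)) (ω[k]) with h | h
        · exact absurd h hne'
        · omega
      obtain ⟨j, hj, hdel⟩ := exchange_right cs (cs.isReflection_simple (ω[k])) hlt hprev rfl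
      -- now π ω = π ((ω.take k).eraseIdx j ++ ω.drop (k+1))
      have hsplit : π ω = π ((ω.take k).eraseIdx j ++ ω.drop (k+1)) := by
        conv_lhs => rw [← List.take_append_drop (k+1) ω]
        rw [cs.wordProd_append, htake, cs.wordProd_append, cs.wordProd_singleton, hdel,
          cs.wordProd_append]
      have hlen2 : ((ω.take k).eraseIdx j ++ ω.drop (k+1)).length ≤ n := by
        rw [List.length_append, List.length_eraseIdx_of_lt hj, hlen_take, List.length_drop]
        omega
      obtain ⟨ω', hsub, hred', hπ'⟩ := ih _ hlen2
      refine ⟨ω', ?_, hred', by rw [hπ', ← hsplit]⟩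
      intro i hi
      have := hsub i hi
      rcases List.mem_append.mp this with h | h
      · exact List.mem_of_mem_take (List.mem_of_mem_eraseIdx h)
      · exact List.mem_of_mem_drop h

end Part4

namespace Part5
open scoped Classical
open Part3 Part4
variable {B W : Type*} [Group W] {M : CoxeterMatrix B} (cs : CoxeterSystem M W)

local prefix:100 "s" => cs.simple
local prefix:100 "π" => cs.wordProd
local prefix:100 "ℓ" => cs.length

theorem wordProd_mem_closure (L : Set B) (ω : List B) (h : ∀ i ∈ ω, i ∈ L) :
    π ω ∈ Subgroup.closure (cs.simple '' L) := by
  induction ω with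
  | nil => rw [cs.wordProd_nil]; exact one_mem _
  | cons i tail ih =>
    rw [cs.wordProd_cons]
    exact mul_mem (Subgroup.subset_closure ⟨i, h i (List.mem_cons_self (a := i) (l := tail)), rfl⟩)
      (ih fun j hj => h j (List.mem_cons_of_mem _ hj))

theorem exists_parabolic_reduced_word (L : Set B) {u : W}
    (hu : u ∈ Subgroup.closure (cs.simple '' L)) :
    ∃ ω : List B, (∀ i ∈ ω, i ∈ L) ∧ cs.IsReduced ω ∧ π ω = u := by
  have h1 : ∃ ω : List B, (∀ i ∈ ω, i ∈ L) ∧ π ω = u := by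
    induction hu using Subgroup.closure_induction with
    | mem x hx =>
      obtain ⟨i, hi, rfl⟩ := hx
      exact ⟨[i], by simpa using hi, cs.wordProd_singleton i⟩
    | one => exact ⟨[], by simp, cs.wordProd_nil⟩
    | mul a b ha hb iha ihb =>
      obtain ⟨ω₁, h₁, rfl⟩ := iha
      obtain ⟨ω₂, h₂, rfl⟩ := ihb
      refine ⟨ω₁ ++ ω₂, ?_, cs.wordProd_append ω₁ ω₂⟩
      intro i hi
      rcases List.mem_append.mp hi with h | h
      · exact h₁ i h
      · exact h₂ i h
    | inv a ha iha =>
      obtain ⟨ω, h, rfl⟩ := iha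
      exact ⟨ω.reverse, fun i hi => h i (List.mem_reverse.mp hi), cs.wordProd_reverse ω⟩
  obtain ⟨ω, hsub, hπ⟩ := h1
  obtain ⟨ω', hsub', hred', hπ'⟩ := exists_reduced_subword cs ω.length ω le_rfl
  exact ⟨ω', fun i hi => hsub i (hsub' i hi), hred', by rw [hπ', hπ]⟩

theorem length_wordProd_mul_min (L : Set B) (d₀ : W)
    (hmin : ∀ v ∈ Subgroup.closure (cs.simple '' L), ℓ d₀ ≤ ℓ (v * d₀)) :
    ∀ ω : List B, (∀ i ∈ ω, i ∈ L) → cs.IsReduced ω → ℓ (π ω * d₀) = ω.length + ℓ d₀ := by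
  intro ω
  induction ω with
  | nil => intro _ _; simp
  | cons i tail ih =>
    intro hsub hred
    have htail_sub : ∀ j ∈ tail, j ∈ L := fun j hj => hsub j (List.mem_cons_of_mem _ hj)
    have htail_red : cs.IsReduced tail := by
      have := CoxeterSystem.IsReduced.drop (ω := i :: tail) hred 1
      simpa using this
    have IH := ih htail_sub htail_red
    rw [cs.wordProd_cons, mul_assoc]
    rcases cs.length_simple_mul (π tail * d₀) i with h | h
    · rw [h, IH]; simp; omega
    · exfalso
      obtain ⟨ωd, hredd, hπd⟩ := cs.exists_reduced_word' d₀
      have hlend : ωd.length = ℓ d₀ := by rw [hπd]; exact hredd.symm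
      have hψred : cs.IsReduced (tail ++ ωd) := by
        unfold CoxeterSystem.IsReduced
        rw [cs.wordProd_append, ← hπd, IH, List.length_append, hlend]
      have hπψ : π (tail ++ ωd) = π tail * d₀ := by rw [cs.wordProd_append, ← hπd]
      have hlt : ℓ (s i * (π tail * d₀)) < ℓ (π tail * d₀) := by omega
      obtain ⟨j, hj, hdel⟩ :=
        exchange_left cs (cs.isReflection_simple i) hlt hψred hπψ
      rcases lt_or_ge j tail.length with hjt | hjt
      · rw [eraseIdx_append_left _ _ _ hjt, cs.wordProd_append, ← hπd] at hdel
        have hcancel : s i * π tail = π (tail.eraseIdx j) := by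
          have h' : s i * π tail * d₀ = π (tail.eraseIdx j) * d₀ := by
            rw [mul_assoc]; exact hdel
          exact mul_right_cancel h'
        have h1 : ℓ (s i * π tail) = tail.length + 1 := by
          have e : s i * π tail = π (i :: tail) := (cs.wordProd_cons i tail).symm
          rw [e, hred]
          simp
        have h2 : ℓ (π (tail.eraseIdx j)) ≤ tail.length - 1 := by
          have := cs.length_wordProd_le (tail.eraseIdx j)
          rwa [List.length_eraseIdx_of_lt hjt] at this
        rw [hcancel] at h1
        omega
      · rw [eraseIdx_append_right _ _ _ hjt, cs.wordProd_append] at hdel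
        set j₂ := j - tail.length with hj₂
        have hj₂lt : j₂ < ωd.length := by
          rw [List.length_append] at hj
          omega
        have hv : ((π tail)⁻¹ * s i * π tail) * d₀ = π (ωd.eraseIdx j₂) := by
          have e : ((π tail)⁻¹ * s i * π tail) * d₀ = (π tail)⁻¹ * (s i * (π tail * d₀)) := by
            group
          rw [e, hdel]
          group
        have hvmem : (π tail)⁻¹ * s i * π tail ∈ Subgroup.closure (cs.simple '' L) := by
          have hm := wordProd_mem_closure cs L tail htail_sub
          exact mul_mem (mul_mem (inv_mem hm)
            (Subgroup.subset_closure ⟨i, hsub i (List.mem_cons_self (a := i) (l := tail)), rfl⟩)) hm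
        have hlen : ℓ (((π tail)⁻¹ * s i * π tail) * d₀) ≤ ℓ d₀ - 1 := by
          rw [hv]
          have := cs.length_wordProd_le (ωd.eraseIdx j₂)
          rw [List.length_eraseIdx_of_lt hj₂lt, hlend] at this
          exact this
        have hge := hmin _ hvmem
        have hd₀pos : 0 < ℓ d₀ := by rw [← hlend]; omega
        omega

theorem length_mul_of_min (L : Set B) (d₀ : W)
    (hmin : ∀ v ∈ Subgroup.closure (cs.simple '' L), ℓ d₀ ≤ ℓ (v * d₀))
    {u : W} (hu : u ∈ Subgroup.closure (cs.simple '' L)) :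
    ℓ (u * d₀) = ℓ u + ℓ d₀ := by
  obtain ⟨ω, hsub, hred, rfl⟩ := exists_parabolic_reduced_word cs L hu
  rw [length_wordProd_mul_min cs L d₀ hmin ω hsub hred, hred]

theorem length_mul_of_X (L : Set B) (d : W)
    (hX : ∀ i ∈ L, ℓ d < ℓ (s i * d))
    {u : W} (hu : u ∈ Subgroup.closure (cs.simple '' L)) :
    ℓ (u * d) = ℓ u + ℓ d := by
  -- find the minimal-length element of the coset `W_L d`
  have hTne : (Set.Nonempty {n : ℕ | ∃ v ∈ Subgroup.closure (cs.simple '' L), ℓ (v * d) = n}) :=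
    ⟨ℓ d, 1, one_mem _, by rw [one_mul]⟩
  obtain ⟨v₀, hv₀mem, hv₀⟩ := Nat.sInf_mem hTne
  set n₀ := sInf {n : ℕ | ∃ v ∈ Subgroup.closure (cs.simple '' L), ℓ (v * d) = n} with hn₀
  have hmin : ∀ v ∈ Subgroup.closure (cs.simple '' L), ℓ (v₀ * d) ≤ ℓ (v * (v₀ * d)) := by
    intro v hv
    rw [← mul_assoc, hv₀]
    exact Nat.sInf_le ⟨v * v₀, mul_mem hv hv₀mem, rfl⟩
  -- show that d is itself minimal, i.e. v₀ can be taken to be 1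
  obtain ⟨ω₀, hsub₀, hred₀, hπ₀⟩ :=
    exists_parabolic_reduced_word cs L (inv_mem hv₀mem)
  have hd : d = v₀⁻¹ * (v₀ * d) := by group
  cases ω₀ with
  | nil =>
    have h1 : v₀⁻¹ = 1 := by rw [← hπ₀, cs.wordProd_nil]
    have h2 : v₀ = 1 := by rwa [inv_eq_one] at h1
    subst h2
    rw [one_mul] at hmin
    exact length_mul_of_min cs L d hmin hu
  | cons i tail =>
    exfalso
    have hiL : i ∈ L := hsub₀ i (List.mem_cons_self (a := i) (l := tail))
    have htail_sub : ∀ j ∈ tail, j ∈ L := fun j hj => hsub₀ j (List.mem_cons_of_mem _ hj)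
    have htail_red : cs.IsReduced tail := by
      have := CoxeterSystem.IsReduced.drop (ω := i :: tail) hred₀ 1
      simpa using this
    have h1 : s i * v₀⁻¹ = π tail := by
      rw [← hπ₀, cs.wordProd_cons, cs.simple_mul_simple_cancel_left]
    have h2 : ℓ (π tail * (v₀ * d)) = tail.length + ℓ (v₀ * d) :=
      length_wordProd_mul_min cs L (v₀ * d) hmin tail htail_sub htail_red
    have h3 : ℓ (v₀⁻¹ * (v₀ * d)) = (tail.length + 1) + ℓ (v₀ * d) := by
      have := length_wordProd_mul_min cs L (v₀ * d) hmin (i :: tail) hsub₀ hred₀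
      rw [hπ₀] at this
      simpa using this
    have h4 : s i * d = π tail * (v₀ * d) := by
      rw [← h1]
      conv_lhs => rw [hd]
      group
    have h5 : ℓ d = (tail.length + 1) + ℓ (v₀ * d) := by
      conv_lhs => rw [hd]
      exact h3
    have h6 := hX i hiL
    rw [h4, h2, h5] at h6
    omega

end Part5

namespace Part6
open scoped Classical
open Part5
variable {B W : Type*} [Group W] {M : CoxeterMatrix B} (cs : CoxeterSystem M W)

local prefix:100 "s" => cs.simple
local prefix:100 "π" => cs.wordProd
local prefix:100 "ℓ" => cs.length

theorem conj_wordProd (d : W) (f : B → B) (L : Set B)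
    (hf : ∀ i ∈ L, d⁻¹ * s i * d = s (f i)) :
    ∀ ω : List B, (∀ i ∈ ω, i ∈ L) → d⁻¹ * π ω * d = π (ω.map f) := by
  intro ω
  induction ω with
  | nil => intro _; simp
  | cons i tail ih =>
    intro hsub
    rw [List.map_cons, cs.wordProd_cons, cs.wordProd_cons,
      ← hf i (hsub i (List.mem_cons_self (a := i) (l := tail))),
      ← ih fun j hj => hsub j (List.mem_cons_of_mem _ hj)]
    group

theorem main (L : Set B) (d u : W)
    (hX : ∀ i ∈ L, ℓ d < ℓ (s i * d))
    (hconj : ∀ i ∈ L, ∃ t, d⁻¹ * s i * d = s t)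
    (hu : u ∈ Subgroup.closure (cs.simple '' L)) :
    ℓ (d⁻¹ * u * d) = ℓ u := by
  classical
  -- upper bound
  obtain ⟨ω, hsub, hred, rfl⟩ := exists_parabolic_reduced_word cs L hu
  set f : B → B := fun i =>
    if h : ∃ t, d⁻¹ * s i * d = s t then h.choose else i with hfdef
  have hf : ∀ i ∈ L, d⁻¹ * s i * d = s (f i) := by
    intro i hi
    have h := hconj i hi
    simp only [hfdef, dif_pos h]
    exact h.choose_spec
  have hconjw : d⁻¹ * π ω * d = π (ω.map f) :=
    conj_wordProd cs d f L hf ω hsub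
  have hupper : ℓ (d⁻¹ * π ω * d) ≤ ℓ (π ω) := by
    rw [hconjw, hred]
    have := cs.length_wordProd_le (ω.map f)
    rwa [List.length_map] at this
  -- lower bound
  have hkey : ℓ (π ω * d) = ℓ (π ω) + ℓ d :=
    length_mul_of_X cs L d hX (wordProd_mem_closure cs L ω hsub)
  have hsplit : π ω * d = d * (d⁻¹ * π ω * d) := by group
  have hlower : ℓ (π ω) ≤ ℓ (d⁻¹ * π ω * d) := by
    have h1 : ℓ (π ω * d) ≤ ℓ d + ℓ (d⁻¹ * π ω * d) := by
      rw [hsplit]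
      exact cs.length_mul_le d (d⁻¹ * π ω * d)
    omega
  omega

end Part6

/-- Conjugation by `d ∈ X_L^♯` preserves the length of elements of `W_L`. -/
theorem stmt14 {B W : Type*} [Fintype B] [Group W] [Fintype W]
    {M : CoxeterMatrix B} (cs : CoxeterSystem M W) (L : Set B) (d u : W)
    (hd : d ∈ CoxXsharp cs L) (hu : u ∈ CoxParabolic cs L) :
    cs.length (d⁻¹ * u * d) = cs.length u := by
  exact Part6.main cs L d u hd.1 hd.2 hu
end
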